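/- For any s-curve with chord angles (α, β), one has |α| < π, |β| < π, and |α − β| ≤ π. -/

import Mathlib

open Real Complex Set

section Aux
open intervalIntegral MeasureTheory



lemma aux_re_real_mul_exp (r x : ℝ) :
    ((r : ℂ) * Complex.exp ((x : ℂ) * Complex.I)).re = r * Real.cos x := by
  simp [Complex.mul_re, Complex.exp_ofReal_mul_I_re, Complex.exp_ofReal_mul_I_im]

lemma aux_arg_real_mul_exp {r x : ℝ} (hr : 0 < r) (hx : |x| < π) :
    Complex.arg ((r : ℂ) * Complex.exp ((x : ℂ) * Complex.I)) = x := by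
  rw [Complex.arg_real_mul _ hr, Complex.exp_mul_I]
  exact Complex.arg_cos_add_sin_mul_I ⟨neg_lt_of_abs_lt hx, (le_abs_self x).trans hx.le⟩

lemma aux_range {a b c : ℝ} {θ : ℝ → ℝ} (hab : a < b) (hc : c ∈ Icc a b)
    (hθcont : ContinuousOn θ (Icc a b))
    (hmono : (MonotoneOn θ (Icc a c) ∧ AntitoneOn θ (Icc c b)) ∨
          (AntitoneOn θ (Icc a c) ∧ MonotoneOn θ (Icc c b)))
    (hturn₁ : |θ c - θ a| ≤ π) (hturn₂ : |θ b - θ c| ≤ π) :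
    ∃ m M : ℝ, M - m ≤ π ∧ (∀ t ∈ Icc a b, θ t ∈ Icc m M) ∧
      ∃ t₀ ∈ Icc a b, θ t₀ = (m + M) / 2 := by
  obtain ⟨hac, hcb⟩ := hc
  have hsub1 : Icc a c ⊆ Icc a b := Icc_subset_Icc le_rfl hcb
  have hsub2 : Icc c b ⊆ Icc a b := Icc_subset_Icc hac le_rfl
  have hmemac : a ∈ Icc a c := ⟨le_rfl, hac⟩
  have hmemcc : c ∈ Icc a c := ⟨hac, le_rfl⟩
  have hmemcc' : c ∈ Icc c b := ⟨le_rfl, hcb⟩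
  have hmembb : b ∈ Icc c b := ⟨hcb, le_rfl⟩
  rcases hmono with ⟨h1, h2⟩ | ⟨h1, h2⟩
  · have hA : θ a ≤ θ c := h1 hmemac hmemcc hac
    have hB : θ b ≤ θ c := h2 hmemcc' hmembb hcb
    refine ⟨min (θ a) (θ b), θ c, ?_, ?_, ?_⟩
    · rcases le_total (θ a) (θ b) with h | h
      · rw [min_eq_left h]
        calc θ c - θ a ≤ |θ c - θ a| := le_abs_self _
        _ ≤ π := hturn₁
      · rw [min_eq_right h]
        have : θ c - θ b ≤ |θ b - θ c| := by rw [abs_sub_comm]; exact le_abs_self _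
        linarith [hturn₂]
    · intro t ht
      rcases le_total t c with htc | hct
      · have h1' := h1 hmemac ⟨ht.1, htc⟩ ht.1
        have h2' := h1 ⟨ht.1, htc⟩ hmemcc htc
        exact ⟨(min_le_left _ _).trans h1', h2'⟩
      · have h1' := h2 ⟨hct, ht.2⟩ hmembb ht.2
        have h2' := h2 hmemcc' ⟨hct, ht.2⟩ hct
        exact ⟨(min_le_right _ _).trans h1', h2'⟩
    · rcases le_total (θ a) (θ b) with h | h
      · rw [min_eq_left h]
        have hmem : (θ a + θ c) / 2 ∈ Icc (θ a) (θ c) := by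
          constructor <;> [linarith; linarith]
        obtain ⟨t₀, ht₀, h⟩ := intermediate_value_Icc hac (hθcont.mono hsub1) hmem
        exact ⟨t₀, hsub1 ht₀, h⟩
      · rw [min_eq_right h]
        have hmem : (θ b + θ c) / 2 ∈ Icc (θ b) (θ c) := by
          constructor <;> [linarith; linarith]
        obtain ⟨t₀, ht₀, h⟩ := intermediate_value_Icc' hcb (hθcont.mono hsub2) hmem
        exact ⟨t₀, hsub2 ht₀, h⟩
  · have hA : θ c ≤ θ a := h1 hmemac hmemcc hac
    have hB : θ c ≤ θ b := h2 hmemcc' hmembb hcb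
    refine ⟨θ c, max (θ a) (θ b), ?_, ?_, ?_⟩
    · rcases le_total (θ a) (θ b) with h | h
      · rw [max_eq_right h]
        calc θ b - θ c ≤ |θ b - θ c| := le_abs_self _
        _ ≤ π := hturn₂
      · rw [max_eq_left h]
        have : θ a - θ c ≤ |θ c - θ a| := by rw [abs_sub_comm]; exact le_abs_self _
        linarith [hturn₁]
    · intro t ht
      rcases le_total t c with htc | hct
      · have h1' := h1 ⟨ht.1, htc⟩ hmemcc htc
        have h2' := h1 hmemac ⟨ht.1, htc⟩ ht.1
        exact ⟨h1', h2'.trans (le_max_left _ _)⟩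
      · have h1' := h2 hmemcc' ⟨hct, ht.2⟩ hct
        have h2' := h2 ⟨hct, ht.2⟩ hmembb ht.2
        exact ⟨h1', h2'.trans (le_max_right _ _)⟩
    · rcases le_total (θ a) (θ b) with h | h
      · rw [max_eq_right h]
        have hmem : (θ c + θ b) / 2 ∈ Icc (θ c) (θ b) := by
          constructor <;> [linarith; linarith]
        obtain ⟨t₀, ht₀, h⟩ := intermediate_value_Icc hcb (hθcont.mono hsub2) hmem
        exact ⟨t₀, hsub2 ht₀, h⟩
      · rw [max_eq_left h]
        have hmem : (θ c + θ a) / 2 ∈ Icc (θ c) (θ a) := by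
          constructor <;> [linarith; linarith]
        obtain ⟨t₀, ht₀, h⟩ := intermediate_value_Icc' hac (hθcont.mono hsub1) hmem
        exact ⟨t₀, hsub1 ht₀, h⟩

lemma aux_pos {a b μ : ℝ} {f : ℝ → ℂ} {θ : ℝ → ℝ} (hab : a < b)
    (hf : ContDiffOn ℝ 1 f (Icc a b))
    (hne : ∀ t ∈ Icc a b, deriv f t ≠ 0)
    (hθcont : ContinuousOn θ (Icc a b))
    (hθ : ∀ t ∈ Icc a b,
      deriv f t = (‖deriv f t‖ : ℂ) * Complex.exp (Complex.I * (θ t : ℂ)))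
    (hall : ∀ t ∈ Icc a b, |θ t - μ| ≤ π / 2)
    (ht0 : ∃ t₀ ∈ Icc a b, θ t₀ = μ) :
    0 < (Complex.exp (-(μ : ℂ) * Complex.I) * (f b - f a)).re := by
  set g : ℝ → ℂ := derivWithin f (Icc a b) with hg
  have hgcont : ContinuousOn g (Icc a b) :=
    hf.continuousOn_derivWithin (uniqueDiffOn_Icc hab) le_rfl
  have hgeq : ∀ t ∈ Ioo a b, g t = deriv f t := fun t ht =>
    derivWithin_of_mem_nhds (Icc_mem_nhds ht.1 ht.2)
  have hderiv : ∀ t ∈ Ioo a b, HasDerivAt f (g t) t := by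
    intro t ht
    have hmem : Icc a b ∈ nhds t := Icc_mem_nhds ht.1 ht.2
    have hd : DifferentiableAt ℝ f t :=
      ((hf.differentiableOn one_ne_zero) t (Ioo_subset_Icc_self ht)).differentiableAt hmem
    rw [hgeq t ht]
    exact hd.hasDerivAt
  -- FTC
  have hgint : IntervalIntegrable g volume a b :=
    (hgcont.mono (by rw [uIcc_of_le hab.le])).intervalIntegrable
  have hC : f b - f a = ∫ t in a..b, g t := by
    rw [intervalIntegral.integral_eq_sub_of_hasDeriv_right_of_le hab.le (hf.continuousOn)
      (fun t ht => (hderiv t ht).hasDerivWithinAt) hgint]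
  -- the real integrand
  set φ : ℝ → ℝ := fun t => (Complex.exp (-(μ : ℂ) * Complex.I) * g t).re with hφ
  have hφcont : ContinuousOn φ (Icc a b) :=
    Complex.continuous_re.comp_continuousOn (continuousOn_const.mul hgcont)
  have hφval : ∀ t ∈ Ioo a b, φ t = ‖deriv f t‖ * Real.cos (θ t - μ) := by
    intro t ht
    have htm : t ∈ Icc a b := Ioo_subset_Icc_self ht
    have : Complex.exp (-(μ : ℂ) * Complex.I) * g t =
        ((‖deriv f t‖ : ℝ) : ℂ) * Complex.exp (((θ t - μ : ℝ) : ℂ) * Complex.I) := by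
      rw [hgeq t ht]
      nth_rewrite 1 [hθ t htm]
      rw [show (((θ t - μ : ℝ)) : ℂ) * Complex.I = -(μ : ℂ) * Complex.I + Complex.I * (θ t : ℂ)
          by push_cast; ring, Complex.exp_add]
      ring
    rw [hφ]; simp only; rw [this, aux_re_real_mul_exp]
  have hφnonneg : ∀ t ∈ Ioo a b, 0 ≤ φ t := by
    intro t ht
    rw [hφval t ht]
    have h := hall t (Ioo_subset_Icc_self ht)
    have hcos : 0 ≤ Real.cos (θ t - μ) := by
      apply Real.cos_nonneg_of_mem_Icc
      rw [abs_le] at h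
      constructor <;> linarith [h.1, h.2]
    positivity
  -- subinterval where φ is positive
  obtain ⟨t₀, ht₀mem, ht₀⟩ := ht0
  have hcw : ContinuousWithinAt θ (Icc a b) t₀ := hθcont t₀ ht₀mem
  rw [Metric.continuousWithinAt_iff] at hcw
  obtain ⟨δ, hδ, hδ'⟩ := hcw (π / 2) (by positivity)
  set u := max a (t₀ - δ / 2) with hu
  set v := min b (t₀ + δ / 2) with hv
  have hau : a ≤ u := le_max_left _ _
  have hvb : v ≤ b := min_le_left _ _
  have huv : u < v := by
    rw [hu, hv]
    apply max_lt <;> apply lt_min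
    · exact hab
    · linarith [ht₀mem.1]
    · linarith [ht₀mem.2]
    · linarith
  have hsubuv : Ioo u v ⊆ Ioo a b := fun t ht => ⟨lt_of_le_of_lt hau ht.1, lt_of_lt_of_le ht.2 hvb⟩
  have hφpos : ∀ t ∈ Ioo u v, 0 < φ t := by
    intro t ht
    have ht' : t ∈ Ioo a b := hsubuv ht
    have htm : t ∈ Icc a b := Ioo_subset_Icc_self ht'
    have hdist : dist t t₀ < δ := by
      have h1 : t < t₀ + δ / 2 := lt_of_lt_of_le ht.2 (min_le_right _ _)
      have h2 : t₀ - δ / 2 < t := lt_of_le_of_lt (le_max_right a _) ht.1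
      rw [Real.dist_eq, abs_lt]
      constructor <;> linarith
    have hθt : |θ t - μ| < π / 2 := by
      have := hδ' htm hdist
      rwa [Real.dist_eq, ht₀] at this
    rw [hφval t ht']
    have hcos : 0 < Real.cos (θ t - μ) := by
      apply Real.cos_pos_of_mem_Ioo
      rw [abs_lt] at hθt
      constructor <;> linarith [hθt.1, hθt.2]
    have habs : 0 < ‖deriv f t‖ := by
      simpa using (hne t htm)
    positivity
  -- integrability of φ on subintervals
  have hφint : ∀ x y, a ≤ x → x ≤ y → y ≤ b → IntervalIntegrable φ volume x y := by
    intro x y hx hxy hy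
    apply (hφcont.mono _).intervalIntegrable
    rw [uIcc_of_le hxy]
    exact Icc_subset_Icc hx hy
  -- a.e. nonnegativity lemmas
  have hane : ∀ᵐ x : ℝ ∂volume, x ≠ a := by
    rw [MeasureTheory.ae_iff]
    convert Real.volume_singleton (a := a) using 2
    ext x; simp
  have hbne : ∀ᵐ x : ℝ ∂volume, x ≠ b := by
    rw [MeasureTheory.ae_iff]
    convert Real.volume_singleton (a := b) using 2
    ext x; simp
  have hI1 : 0 ≤ ∫ t in a..u, φ t := by
    apply intervalIntegral.integral_nonneg_of_ae_restrict hau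
    filter_upwards [MeasureTheory.ae_restrict_mem measurableSet_Icc,
      MeasureTheory.ae_restrict_of_ae hane] with x hx hxa
    exact hφnonneg x ⟨lt_of_le_of_ne hx.1 (Ne.symm hxa),
      lt_of_le_of_lt hx.2 (lt_of_lt_of_le huv hvb)⟩
  have hI3 : 0 ≤ ∫ t in v..b, φ t := by
    apply intervalIntegral.integral_nonneg_of_ae_restrict hvb
    filter_upwards [MeasureTheory.ae_restrict_mem measurableSet_Icc,
      MeasureTheory.ae_restrict_of_ae hbne] with x hx hxb
    exact hφnonneg x ⟨lt_of_le_of_lt hau (lt_of_lt_of_le huv hx.1),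
      lt_of_le_of_ne hx.2 hxb⟩
  have hI2 : 0 < ∫ t in u..v, φ t :=
    intervalIntegral.intervalIntegral_pos_of_pos_on
      (hφint u v hau huv.le hvb) hφpos huv
  have hsplit : (∫ t in a..b, φ t) = (∫ t in a..u, φ t) + (∫ t in u..v, φ t)
      + (∫ t in v..b, φ t) := by
    rw [intervalIntegral.integral_add_adjacent_intervals
        (hφint a u le_rfl hau (huv.le.trans hvb))
        (hφint u v hau huv.le hvb),
      intervalIntegral.integral_add_adjacent_intervals
        (hφint a v le_rfl (hau.trans huv.le) hvb)
        (hφint v b (hau.trans huv.le) hvb le_rfl)]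
  have hpos : 0 < ∫ t in a..b, φ t := by
    rw [hsplit]; linarith
  -- identify the integral with the real part
  have hw : Complex.exp (-(μ : ℂ) * Complex.I) * (f b - f a)
      = ∫ t in a..b, Complex.exp (-(μ : ℂ) * Complex.I) * g t := by
    rw [hC, intervalIntegral.integral_const_mul]
  have hint2 : IntervalIntegrable (fun t => Complex.exp (-(μ : ℂ) * Complex.I) * g t)
      volume a b := hgint.const_mul _
  have hre : (Complex.exp (-(μ : ℂ) * Complex.I) * (f b - f a)).re = ∫ t in a..b, φ t := by
    rw [hw]
    exact (Complex.reCLM.intervalIntegral_comp_comm hint2).symm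
  rw [hre]
  exact hpos

lemma aux_main {a b c : ℝ} {f : ℝ → ℂ} {θ : ℝ → ℝ} (hab : a < b) (hc : c ∈ Icc a b)
    (hf : ContDiffOn ℝ 1 f (Icc a b))
    (hne : ∀ t ∈ Icc a b, deriv f t ≠ 0)
    (hθcont : ContinuousOn θ (Icc a b))
    (hθ : ∀ t ∈ Icc a b,
      deriv f t = (‖deriv f t‖ : ℂ) * Complex.exp (Complex.I * (θ t : ℂ)))
    (hmono : (MonotoneOn θ (Icc a c) ∧ AntitoneOn θ (Icc c b)) ∨
          (AntitoneOn θ (Icc a c) ∧ MonotoneOn θ (Icc c b)))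
    (hturn₁ : |θ c - θ a| ≤ π) (hturn₂ : |θ b - θ c| ≤ π) :
    |Complex.arg (deriv f a / (f b - f a))| < π ∧
      |Complex.arg (deriv f b / (f b - f a))| < π ∧
      |Complex.arg (deriv f a / (f b - f a)) - Complex.arg (deriv f b / (f b - f a))| ≤ π := by
  obtain ⟨m, M, hmM, hrange, t₀, ht₀mem, ht₀⟩ := aux_range hab hc hθcont hmono hturn₁ hturn₂
  set μ : ℝ := (m + M) / 2 with hμ
  have hall : ∀ t ∈ Icc a b, |θ t - μ| ≤ π / 2 := by
    intro t ht
    have h := hrange t ht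
    rw [abs_le]
    constructor <;> (simp only [hμ]; linarith [h.1, h.2])
  have hwre := aux_pos hab hf hne hθcont hθ hall ⟨t₀, ht₀mem, ht₀⟩
  set w : ℂ := Complex.exp (-(μ : ℂ) * Complex.I) * (f b - f a) with hwdef
  have hwne : w ≠ 0 := by
    intro h
    rw [h] at hwre
    simp at hwre
  have hCne : f b - f a ≠ 0 := by
    intro h
    apply hwne
    rw [hwdef, h, mul_zero]
  set ψ : ℝ := Complex.arg w with hψdef
  have hψ : |ψ| < π / 2 := Complex.abs_arg_lt_pi_div_two_iff.mpr (Or.inl hwre)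
  have habsw : 0 < ‖w‖ := norm_pos_iff.mpr hwne
  have habsw' : ((‖w‖ : ℝ) : ℂ) ≠ 0 := by exact_mod_cast habsw.ne'
  have h1 : ((‖w‖ : ℝ) : ℂ) * Complex.exp ((ψ : ℂ) * Complex.I) = w :=
    Complex.norm_mul_exp_arg_mul_I w
  have h2 : f b - f a = Complex.exp ((μ : ℂ) * Complex.I) * w := by
    rw [hwdef, ← mul_assoc, ← Complex.exp_add,
      show (μ : ℂ) * Complex.I + -(μ : ℂ) * Complex.I = 0 by ring, Complex.exp_zero, one_mul]
  clear_value w ψ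
  have hCeq : f b - f a = ((‖w‖ : ℝ) : ℂ) * Complex.exp (((μ + ψ : ℝ) : ℂ) * Complex.I) := by
    rw [h2, show ((μ + ψ : ℝ) : ℂ) * Complex.I = (μ : ℂ) * Complex.I + (ψ : ℂ) * Complex.I
      by push_cast; ring, Complex.exp_add]
    linear_combination -Complex.exp ((μ : ℂ) * Complex.I) * h1
  have key : ∀ t ∈ Icc a b, Complex.arg (deriv f t / (f b - f a)) = θ t - μ - ψ := by
    intro t ht
    have habs : 0 < ‖deriv f t‖ := norm_pos_iff.mpr (hne t ht)
    have hx : |θ t - μ - ψ| < π := by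
      have h1 := hall t ht
      rw [abs_le] at h1
      rw [abs_lt] at hψ ⊢
      constructor <;> linarith [h1.1, h1.2, hψ.1, hψ.2, Real.pi_pos]
    have heq : deriv f t / (f b - f a) =
        ((‖deriv f t‖ / ‖w‖ : ℝ) : ℂ) *
          Complex.exp (((θ t - μ - ψ : ℝ) : ℂ) * Complex.I) := by
      rw [div_eq_iff hCne, hCeq]
      nth_rewrite 1 [hθ t ht]
      rw [show Complex.exp (Complex.I * ((θ t : ℝ) : ℂ)) =
          Complex.exp (((θ t - μ - ψ : ℝ) : ℂ) * Complex.I) *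
            Complex.exp (((μ + ψ : ℝ) : ℂ) * Complex.I) by
        rw [← Complex.exp_add]; congr 1; push_cast; ring]
      push_cast
      field_simp [habsw']
    rw [heq, aux_arg_real_mul_exp (by positivity) hx]
  have hka := key a ⟨le_rfl, hab.le⟩
  have hkb := key b ⟨hab.le, le_rfl⟩
  have hta := hall a ⟨le_rfl, hab.le⟩
  have htb := hall b ⟨hab.le, le_rfl⟩
  rw [abs_le] at hta htb
  rw [abs_lt] at hψ
  refine ⟨?_, ?_, ?_⟩
  · rw [hka, abs_lt]
    constructor <;> linarith [hta.1, hta.2, hψ.1, hψ.2, Real.pi_pos]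
  · rw [hkb, abs_lt]
    constructor <;> linarith [htb.1, htb.2, hψ.1, hψ.2, Real.pi_pos]
  · rw [hka, hkb, show θ a - μ - ψ - (θ b - μ - ψ) = θ a - θ b by ring]
    have h1 := hrange a ⟨le_rfl, hab.le⟩
    have h2 := hrange b ⟨hab.le, le_rfl⟩
    rw [abs_le]
    constructor <;> linarith [h1.1, h1.2, h2.1, h2.2]

end Aux

/-- An s-curve: a C¹ plane curve `f : [a,b] → ℂ` with nonvanishing derivative which,
as measured by a continuous turning-angle function `θ` (so that
`f'(t) = |f'(t)| · exp(i θ(t))`), first turns monotonically at most `π` in one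
direction (up to time `c`) and then monotonically at most `π` in the opposite
direction. -/
structure SCurve where
  a : ℝ
  b : ℝ
  hab : a < b
  f : ℝ → ℂ
  θ : ℝ → ℝ
  c : ℝ
  hc : c ∈ Icc a b
  hf : ContDiffOn ℝ 1 f (Icc a b)
  hne : ∀ t ∈ Icc a b, deriv f t ≠ 0
  hθcont : ContinuousOn θ (Icc a b)
  hθ : ∀ t ∈ Icc a b,
    deriv f t = (‖deriv f t‖ : ℂ) * Complex.exp (Complex.I * (θ t : ℂ))
  hmono : (MonotoneOn θ (Icc a c) ∧ AntitoneOn θ (Icc c b)) ∨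
          (AntitoneOn θ (Icc a c) ∧ MonotoneOn θ (Icc c b))
  hturn₁ : |θ c - θ a| ≤ π
  hturn₂ : |θ b - θ c| ≤ π

/-- Initial chord angle of an s-curve. -/
noncomputable def SCurve.alpha (s : SCurve) : ℝ :=
  Complex.arg (deriv s.f s.a / (s.f s.b - s.f s.a))

/-- Terminal chord angle of an s-curve. -/
noncomputable def SCurve.beta (s : SCurve) : ℝ :=
  Complex.arg (deriv s.f s.b / (s.f s.b - s.f s.a))

theorem scurve_chord_angle_ineq (s : SCurve) :
    |s.alpha| < π ∧ |s.beta| < π ∧ |s.alpha - s.beta| ≤ π := by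
  have h := aux_main s.hab s.hc s.hf s.hne s.hθcont s.hθ s.hmono s.hturn₁ s.hturn₂
  exact ⟨h.1, h.2.1, h.2.2⟩
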